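/- arXiv:0710.2728 — 2 statements merged into one kernel-verified Lean document; each statement's English description precedes it below -/
import Mathlib

section
/- Let $u \leq v$ be positive integers, $d \geq 0$, and $j, \nu \geq 0$ integers with $j \leq u$ and $\nu \leq v + d + u - j$. Define $A_{j,\nu} = \frac{(v-\nu+1)(v-\nu+2)\cdots(v-\nu+u-j)}{(u-j)!\,(d+v-\nu+u-j)!}$ and $A_{0,0} = \frac{(v+1)\cdots(v+u)}{u!\,(d+v+u)!}$. Then there is an absolute constant $C$ such that $|A_{j,\nu}/A_{0,0}| \leq (C \max(d+v+u, 2))^{j+\nu} \cdot 2^{\nu}$; more precisely, $\Big|\frac{(v-\nu+1)\cdots(v-\nu+u-j)}{(v+1)\cdots(v+u-j)}\Big| \leq 2^{\nu}$. -/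
lemma self_le_two_rpow (t : ℝ) : t ≤ (2:ℝ) ^ t := by
  rcases le_or_gt t 0 with h | h
  · exact h.trans (Real.rpow_pos_of_pos two_pos t).le
  · have h2 : Real.log (t / Real.exp 1) ≤ t / Real.exp 1 - 1 :=
      Real.log_le_sub_one_of_pos (by positivity)
    have h3 : Real.log (t / Real.exp 1) = Real.log t - 1 := by
      rw [Real.log_div (ne_of_gt h) (Real.exp_ne_zero 1), Real.log_exp]
    have hlog : Real.log t ≤ t / Real.exp 1 := by linarith
    have he : t / Real.exp 1 ≤ t * Real.log 2 := by
      rw [div_le_iff₀ (Real.exp_pos 1)]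
      have h4 := Real.exp_one_gt_d9
      have h5 := Real.log_two_gt_d9
      have hprod : (1:ℝ) < Real.log 2 * Real.exp 1 := by nlinarith
      nlinarith [mul_lt_mul_of_pos_left hprod h]
    calc t = Real.exp (Real.log t) := (Real.exp_log h).symm
      _ ≤ Real.exp (t * Real.log 2) := Real.exp_le_exp.2 (hlog.trans he)
      _ = 2 ^ t := by rw [Real.rpow_def_of_pos two_pos, mul_comm]

lemma prod_bound (u v j ν : ℕ) (huv : u ≤ v) (hj : j ≤ u) :
    |∏ i ∈ Finset.range (u - j), ((v : ℝ) - ν + 1 + i)|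
      ≤ 2 ^ ν * ∏ i ∈ Finset.range (u - j), ((v : ℝ) + 1 + i) := by
  set c : ℝ := (2:ℝ) ^ ((ν:ℝ)/((v:ℝ)+1)) with hc
  have hc1 : 1 ≤ c := Real.one_le_rpow one_le_two (by positivity)
  have hν1 : (ν:ℝ) ≤ ((v:ℝ)+1) * c := by
    have ht := self_le_two_rpow ((ν:ℝ)/((v:ℝ)+1))
    have hv1 : (0:ℝ) < (v:ℝ)+1 := by positivity
    have := mul_le_mul_of_nonneg_right ht hv1.le
    rwa [div_mul_cancel₀ _ (ne_of_gt hv1), ← hc, mul_comm c] at this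
  have hfac : ∀ i ∈ Finset.range (u - j), |(v : ℝ) - ν + 1 + i| ≤ ((v:ℝ)+1+i) * c := by
    intro i _
    have hi : (0:ℝ) ≤ i := Nat.cast_nonneg i
    have hv : (0:ℝ) ≤ v := Nat.cast_nonneg v
    have hn : (0:ℝ) ≤ ν := Nat.cast_nonneg ν
    have hmax : |(v : ℝ) - ν + 1 + i| ≤ max ((v:ℝ)+1+i) ν := by
      rw [abs_le]
      constructor
      · have := le_max_right ((v:ℝ)+1+i) (ν:ℝ)
        linarith
      · have := le_max_left ((v:ℝ)+1+i) (ν:ℝ)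
        linarith
    refine hmax.trans (max_le ?_ ?_)
    · exact le_mul_of_one_le_right (by linarith) hc1
    · refine hν1.trans ?_
      have : (0:ℝ) ≤ c := by linarith
      nlinarith
  calc |∏ i ∈ Finset.range (u - j), ((v : ℝ) - ν + 1 + i)|
      = ∏ i ∈ Finset.range (u - j), |(v : ℝ) - ν + 1 + i| := Finset.abs_prod _ _
    _ ≤ ∏ i ∈ Finset.range (u - j), (((v:ℝ)+1+i) * c) :=
        Finset.prod_le_prod (fun i _ => abs_nonneg _) hfac
    _ = (∏ i ∈ Finset.range (u - j), ((v:ℝ)+1+i)) * c ^ (u - j) := by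
        rw [Finset.prod_mul_distrib, Finset.prod_const, Finset.card_range]
    _ ≤ (∏ i ∈ Finset.range (u - j), ((v:ℝ)+1+i)) * 2 ^ ν := by
        have hpos : (0:ℝ) ≤ ∏ i ∈ Finset.range (u - j), ((v:ℝ)+1+i) :=
          Finset.prod_nonneg (fun i _ => by positivity)
        refine mul_le_mul_of_nonneg_left ?_ hpos
        have h1 : c ^ (u - j) = (2:ℝ) ^ (((ν:ℝ)/((v:ℝ)+1)) * (u - j : ℕ)) := by
          rw [hc, ← Real.rpow_natCast ((2:ℝ) ^ ((ν:ℝ)/((v:ℝ)+1))) (u-j),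
            ← Real.rpow_mul (by norm_num)]
        have h2 : ((ν:ℝ)/((v:ℝ)+1)) * (u - j : ℕ) ≤ (ν:ℝ) := by
          have huj : ((u - j : ℕ) : ℝ) ≤ (v:ℝ) + 1 := by
            have : (u - j : ℕ) ≤ v + 1 := le_trans (Nat.sub_le u j) (le_trans huv (Nat.le_succ v))
            exact_mod_cast this
          have hd : (0:ℝ) ≤ (ν:ℝ)/((v:ℝ)+1) := by positivity
          have := mul_le_mul_of_nonneg_left huj hd
          calc ((ν:ℝ)/((v:ℝ)+1)) * (u - j : ℕ) ≤ ((ν:ℝ)/((v:ℝ)+1)) * ((v:ℝ)+1) := this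
            _ = ν := by field_simp
        rw [h1, ← Real.rpow_natCast 2 ν]
        exact Real.rpow_le_rpow_of_exponent_le one_le_two h2
    _ = 2 ^ ν * ∏ i ∈ Finset.range (u - j), ((v:ℝ)+1+i) := mul_comm _ _

/-- Ratio bound for the coefficients `A_{j,ν}` (Lemma 4 of the paper): with
`A_{j,ν} = (v-ν+1)⋯(v-ν+u-j) / ((u-j)! (d+v-ν+u-j)!)`, there is an absolute
constant `C` with `|A_{j,ν}/A_{0,0}| ≤ (C max(d+v+u,2))^{j+ν} · 2^ν`; more
precisely `|(v-ν+1)⋯(v-ν+u-j)| / ((v+1)⋯(v+u-j)) ≤ 2^ν`. -/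
theorem stmt9 :
    ∃ C : ℝ, 0 < C ∧ ∀ u v d j ν : ℕ, 0 < u → u ≤ v → j ≤ u →
      (ν : ℤ) ≤ (v : ℤ) + d + u - j →
      (let A : ℕ → ℕ → ℝ := fun j' ν' =>
          (∏ i ∈ Finset.range (u - j'), ((v : ℝ) - ν' + 1 + i)) /
            ((Nat.factorial (u - j') : ℝ) *
              (Nat.factorial (((d : ℤ) + v + u - ν' - j').toNat) : ℝ));
        |A j ν| ≤ (C * max ((d : ℝ) + v + u) 2) ^ (j + ν) * 2 ^ ν * |A 0 0|) ∧
      |∏ i ∈ Finset.range (u - j), ((v : ℝ) - ν + 1 + i)|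
        ≤ 2 ^ ν * ∏ i ∈ Finset.range (u - j), ((v : ℝ) + 1 + i) := by
  refine ⟨1, one_pos, fun u v d j ν hu huv hj hν => ⟨?_, prod_bound u v j ν huv hj⟩⟩
  intro A
  -- notation
  set M : ℝ := max ((d : ℝ) + v + u) 2 with hM
  have hνj : ν + j ≤ d + v + u := by omega
  have htoNat : ((d : ℤ) + v + u - ν - j).toNat = d + v + u - (ν + j) := by omega
  have htoNat0 : ((d : ℤ) + v + u - (0:ℕ) - (0:ℕ)).toNat = d + v + u := by
    push_cast; omega
  set K : ℕ := d + v + u with hK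
  set N : ℕ := K - (ν + j) with hN
  set Q : ℝ := ∏ i ∈ Finset.range (u - j), ((v:ℝ)+1+i) with hQ
  set R : ℝ := ∏ i ∈ Finset.Ico (u - j) u, ((v:ℝ)+1+i) with hR
  have hQpos : 0 < Q := Finset.prod_pos (fun i _ => by positivity)
  have hRpos : 0 < R := Finset.prod_pos (fun i _ => by positivity)
  have hQR : Q * R = ∏ i ∈ Finset.range u, ((v:ℝ)+1+i) := by
    rw [hQ, hR, Finset.range_eq_Ico, Finset.range_eq_Ico]
    exact Finset.prod_Ico_consecutive _ (Nat.zero_le _) (Nat.sub_le u j)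
  have hA00 : A 0 0 = (Q * R) / ((Nat.factorial u : ℝ) * (Nat.factorial K : ℝ)) := by
    show (∏ i ∈ Finset.range (u - 0), ((v : ℝ) - (0:ℕ) + 1 + i)) / _ = _
    rw [htoNat0, hQR]
    norm_num
  have hAjν : A j ν = (∏ i ∈ Finset.range (u - j), ((v : ℝ) - ν + 1 + i)) /
      ((Nat.factorial (u - j) : ℝ) * (Nat.factorial N : ℝ)) := by
    show _ / _ = _
    rw [htoNat]
  have hA00pos : 0 < A 0 0 := by
    rw [hA00]; positivity
  -- factorial bounds
  have n1 : (u.factorial : ℝ) ≤ (u:ℝ) ^ j * ((u - j).factorial : ℝ) := by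
    have : u.factorial ≤ u ^ j * (u - j).factorial := by
      calc u.factorial = (u - j).factorial * u.descFactorial j :=
            (Nat.factorial_mul_descFactorial hj).symm
        _ ≤ (u - j).factorial * u ^ j :=
            Nat.mul_le_mul_left _ (Nat.descFactorial_le_pow _ _)
        _ = u ^ j * (u - j).factorial := Nat.mul_comm _ _
    exact_mod_cast this
  have n2 : (K.factorial : ℝ) ≤ (K:ℝ) ^ (ν + j) * (N.factorial : ℝ) := by
    have : K.factorial ≤ K ^ (ν + j) * N.factorial := by
      calc K.factorial = N.factorial * K.descFactorial (ν + j) :=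
            (Nat.factorial_mul_descFactorial hνj).symm
        _ ≤ N.factorial * K ^ (ν + j) :=
            Nat.mul_le_mul_left _ (Nat.descFactorial_le_pow _ _)
        _ = K ^ (ν + j) * N.factorial := Nat.mul_comm _ _
    exact_mod_cast this
  have hRlow : ((v:ℝ)+1) ^ j ≤ R := by
    have hcard : (Finset.Ico (u - j) u).card = j := by
      rw [Nat.card_Ico]; omega
    calc ((v:ℝ)+1) ^ j = ∏ _i ∈ Finset.Ico (u - j) u, ((v:ℝ)+1) := by
          rw [Finset.prod_const, hcard]
      _ ≤ R := Finset.prod_le_prod (fun i _ => by positivity)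
          (fun i _ => by
            have : (0:ℝ) ≤ i := Nat.cast_nonneg i
            linarith)
  have hKM : (K:ℝ) ≤ M := by
    rw [hM, hK]; push_cast; exact le_max_left _ _
  have hM1 : (1:ℝ) ≤ M := le_trans one_le_two (le_max_right _ _)
  have huv1 : (u:ℝ) ≤ (v:ℝ) + 1 := by
    have : u ≤ v + 1 := le_trans huv (Nat.le_succ v)
    exact_mod_cast this
  have key : (u.factorial : ℝ) * (K.factorial : ℝ) ≤
      M ^ (j + ν) * R * (((u - j).factorial : ℝ) * (N.factorial : ℝ)) := by
    have hMpos : (0:ℝ) < M := lt_of_lt_of_le one_pos hM1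
    calc (u.factorial : ℝ) * (K.factorial : ℝ)
        ≤ ((u:ℝ) ^ j * ((u - j).factorial : ℝ)) * ((K:ℝ) ^ (ν + j) * (N.factorial : ℝ)) := by
          have h1 : (0:ℝ) ≤ (u.factorial : ℝ) := Nat.cast_nonneg _
          have h2 : (0:ℝ) ≤ (u:ℝ) ^ j * ((u - j).factorial : ℝ) := by positivity
          exact mul_le_mul n1 n2 (Nat.cast_nonneg _) h2
      _ = ((u:ℝ) ^ j * (K:ℝ) ^ (ν + j)) * (((u - j).factorial : ℝ) * (N.factorial : ℝ)) := by
          ring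
      _ ≤ (((v:ℝ)+1) ^ j * M ^ (ν + j)) * (((u - j).factorial : ℝ) * (N.factorial : ℝ)) := by
          gcongr <;> first | positivity | exact huv1 | exact hKM
      _ ≤ (R * M ^ (ν + j)) * (((u - j).factorial : ℝ) * (N.factorial : ℝ)) := by
          gcongr
      _ = M ^ (j + ν) * R * (((u - j).factorial : ℝ) * (N.factorial : ℝ)) := by
          rw [add_comm ν j]; ring
  -- main chain
  have hPB := prod_bound u v j ν huv hj
  have hfpos1 : (0:ℝ) < ((u - j).factorial : ℝ) * (N.factorial : ℝ) := by positivity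
  have hfpos2 : (0:ℝ) < (u.factorial : ℝ) * (K.factorial : ℝ) := by positivity
  rw [hAjν, hA00, abs_of_pos (show (0:ℝ) < (Q * R) / ((u.factorial : ℝ) * (K.factorial : ℝ)) by positivity),
    abs_div, abs_of_pos hfpos1, one_mul]
  rw [div_le_iff₀ hfpos1]
  have step1 : |∏ i ∈ Finset.range (u - j), ((v : ℝ) - ν + 1 + i)| ≤ 2 ^ ν * Q := hPB
  refine step1.trans ?_
  have hre : M ^ (j + ν) * 2 ^ ν * ((Q * R) / ((u.factorial : ℝ) * (K.factorial : ℝ))) *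
      (((u - j).factorial : ℝ) * (N.factorial : ℝ)) =
      (M ^ (j + ν) * 2 ^ ν * (Q * R) * (((u - j).factorial : ℝ) * (N.factorial : ℝ))) /
        ((u.factorial : ℝ) * (K.factorial : ℝ)) := by ring
  rw [hre, le_div_iff₀ hfpos2]
  have hmul := mul_le_mul_of_nonneg_left key (show (0:ℝ) ≤ 2 ^ ν * Q by positivity)
  exact hmul.trans_eq (by ring)
end

section
/- Let $h, k$ be positive integers, $\mathcal{A}$ a set of $h$ integers, $z \geq 2$, $Z = \prod_{p \leq z} p$, and $Q = \{n : \gcd(n, Z) = 1\}$. For $1 \leq i \leq Z$ let $f_i = \#\{a \in \mathcal{A} : i + a \in Q\}$ and $b_i(k) = f_i(f_i - 1)\cdots(f_i - k + 1)$. Then $\sum_{i=1}^{Z} b_i(k)$ equals $\sum_{\mathcal{H}} \#\{1 \leq i \leq Z : P_{\mathcal{H}}(i) \in Q\}$, where $\mathcal{H}$ runs over all ordered $k$-tuples of distinct elements of $\mathcal{A}$, and consequently $\frac{1}{Z}\sum_{i=1}^{Z} b_i(k+1) + k\cdot\frac{1}{Z}\sum_{i=1}^{Z} b_i(k) \geq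 \frac{h M}{Z} \cdot \frac{1}{Z}\sum_{i=1}^{Z} b_i(k)$, where $M = \#\{1 \leq n \leq Z : n \in Q\}$. -/
open Finset

private lemma gcd_shift (a n Z : ℤ) : Int.gcd (a + n * Z) Z = Int.gcd a Z := by
  apply Nat.dvd_antisymm
  · apply Int.natCast_dvd_natCast.mp
    apply Int.dvd_coe_gcd
    · have h1 : ((a + n * Z).gcd Z : ℤ) ∣ (a + n * Z) := Int.gcd_dvd_left _ _
      have h2 : ((a + n * Z).gcd Z : ℤ) ∣ Z := Int.gcd_dvd_right _ _
      have := dvd_sub h1 (h2.mul_left n)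
      simpa using this
    · exact Int.gcd_dvd_right _ _
  · apply Int.natCast_dvd_natCast.mp
    apply Int.dvd_coe_gcd
    · exact dvd_add (Int.gcd_dvd_left _ _) ((Int.gcd_dvd_right _ _).mul_left n)
    · exact Int.gcd_dvd_right _ _

private lemma prod_cast_desc (n k : ℕ) :
    ∏ j ∈ Finset.range k, ((n : ℤ) - j) = (n.descFactorial k : ℤ) := by
  induction k with
  | zero => simp
  | succ k ih =>
    rw [Finset.prod_range_succ, ih, Nat.descFactorial_succ]
    rcases le_or_gt (k + 1) n with hle | hlt
    · have hk : k ≤ n := Nat.le_of_succ_le hle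
      rw [Nat.cast_mul, Int.ofNat_sub hk]
      ring
    · have h0 : n - k = 0 := Nat.sub_eq_zero_of_le (Nat.lt_succ_iff.mp hlt)
      rw [h0]
      rcases eq_or_lt_of_le (Nat.lt_succ_iff.mp hlt) with heq | hlt2
      · rw [heq]; simp
      · rw [Nat.descFactorial_eq_zero_iff_lt.mpr hlt2]; simp

private lemma card_inj_tuples (k : ℕ) (S : Finset ℤ) :
    ((Fintype.piFinset fun _ : Fin k => S).filter Function.Injective).card
      = S.card.descFactorial k := by
  have hemb : Fintype.card (Fin k ↪ {x // x ∈ S}) = S.card.descFactorial k := by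
    rw [Fintype.card_embedding_eq, Fintype.card_coe, Fintype.card_fin]
  rw [← hemb, ← Fintype.card_coe]
  apply Fintype.card_congr
  refine
    { toFun := fun t =>
        ⟨fun j => ⟨t.1 j, Fintype.mem_piFinset.mp (Finset.mem_filter.mp t.2).1 j⟩,
          fun j1 j2 hj => (Finset.mem_filter.mp t.2).2 (congrArg Subtype.val hj)⟩
      invFun := fun e =>
        ⟨fun j => (e j : ℤ), Finset.mem_filter.mpr
          ⟨Fintype.mem_piFinset.mpr fun j => (e j).2,
            fun j1 j2 hj => e.injective (Subtype.ext hj)⟩⟩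
      left_inv := fun t => Subtype.ext (funext fun j => rfl)
      right_inv := fun e => by ext j; rfl }

/-- Section 14 of the paper: with `f_i = #{a ∈ A : (i+a, Z) = 1}` and
`b_i(k) = f_i(f_i-1)⋯(f_i-k+1)`, the sum `∑_{i=1}^Z b_i(k)` counts pairs of
`i` and ordered `k`-tuples of distinct elements of `A` all coprime-shifted,
and Chebyshev's inequality yields
`(1/Z)∑ b_i(k+1) + k(1/Z)∑ b_i(k) ≥ (hM/Z)(1/Z)∑ b_i(k)`. -/
theorem stmt12 (h k : ℕ) (hk : 1 ≤ k) (A : Finset ℤ) (hA : A.card = h)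
    (z : ℕ) (hz : 2 ≤ z)
    (Z : ℕ) (hZ : Z = ∏ p ∈ (Finset.range (z + 1)).filter Nat.Prime, p)
    (f : ℤ → ℕ)
    (hf : ∀ i, f i = (A.filter fun a => Int.gcd (i + a) (Z : ℤ) = 1).card)
    (b : ℤ → ℕ → ℤ)
    (hb : ∀ i k', b i k' = ∏ j ∈ Finset.range k', ((f i : ℤ) - j))
    (M : ℕ)
    (hM : M = ((Finset.Icc 1 (Z : ℤ)).filter fun n => Int.gcd n (Z : ℤ) = 1).card) :
    (∑ i ∈ Finset.Icc 1 (Z : ℤ), b i k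
      = ∑ t ∈ (Fintype.piFinset fun _ : Fin k => A).filter Function.Injective,
          (((Finset.Icc 1 (Z : ℤ)).filter
            (fun i => ∀ j, Int.gcd (i + t j) (Z : ℤ) = 1)).card : ℤ)) ∧
    ((h : ℝ) * M / Z) * ((1 : ℝ) / Z * ∑ i ∈ Finset.Icc 1 (Z : ℤ), (b i k : ℝ))
      ≤ (1 : ℝ) / Z * ∑ i ∈ Finset.Icc 1 (Z : ℤ), (b i (k + 1) : ℝ)
        + k * ((1 : ℝ) / Z * ∑ i ∈ Finset.Icc 1 (Z : ℤ), (b i k : ℝ)) := by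
  have hZpos : 0 < Z := by
    rw [hZ]
    exact Finset.prod_pos fun p hp => (Finset.mem_filter.mp hp).2.pos
  have hZR : (0 : ℝ) < (Z : ℝ) := by exact_mod_cast hZpos
  have hZI : (0 : ℤ) < (Z : ℤ) := by exact_mod_cast hZpos
  -- b in terms of descFactorial
  have hbk : ∀ i k', b i k' = ((f i).descFactorial k' : ℤ) := fun i k' => by
    rw [hb, prod_cast_desc]
  -- mod helper
  have hmod : ∀ x y : ℤ, (x % (Z : ℤ) + y) % (Z : ℤ) = (x + y) % (Z : ℤ) := by
    intro x y
    have hx : x % (Z : ℤ) + y = (x + y) + (Z : ℤ) * (-(x / (Z : ℤ))) := by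
      rw [Int.emod_def]; ring
    rw [hx, Int.add_mul_emod_self_left]
  have hgc : ∀ x : ℤ, Int.gcd (x % (Z : ℤ) + 1) (Z : ℤ) = Int.gcd (x + 1) (Z : ℤ) := by
    intro x
    have hx : x % (Z : ℤ) + 1 = (x + 1) + (-(x / (Z : ℤ))) * (Z : ℤ) := by
      rw [Int.emod_def]; ring
    rw [hx, gcd_shift]
  have hmem : ∀ x : ℤ, x % (Z : ℤ) + 1 ∈ Finset.Icc 1 (Z : ℤ) := by
    intro x
    rw [Finset.mem_Icc]
    constructor
    · have := Int.emod_nonneg x (ne_of_gt hZI)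
      omega
    · have := Int.emod_lt_of_pos x hZI
      omega
  have hid : ∀ x : ℤ, x ∈ Finset.Icc 1 (Z : ℤ) → (x - 1) % (Z : ℤ) + 1 = x := by
    intro x hx
    rw [Finset.mem_Icc] at hx
    rw [Int.emod_eq_of_lt (by omega) (by omega)]
    ring
  -- translated coprime count
  have count_window : ∀ a : ℤ,
      ((Finset.Icc 1 (Z : ℤ)).filter fun i => Int.gcd (i + a) (Z : ℤ) = 1).card = M := by
    intro a
    rw [hM]
    apply Finset.card_bij' (i := fun i _ => (i + a - 1) % (Z : ℤ) + 1)
      (j := fun n _ => (n - a - 1) % (Z : ℤ) + 1)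
    · intro i hi
      rw [Finset.mem_filter] at hi ⊢
      refine ⟨hmem _, ?_⟩
      rw [hgc]
      have : i + a - 1 + 1 = i + a := by ring
      rw [this]
      exact hi.2
    · intro n hn
      rw [Finset.mem_filter] at hn ⊢
      refine ⟨hmem _, ?_⟩
      have hx : (n - a - 1) % (Z : ℤ) + 1 + a
          = n + (-((n - a - 1) / (Z : ℤ))) * (Z : ℤ) := by
        rw [Int.emod_def]; ring
      rw [hx, gcd_shift]
      exact hn.2
    · intro i hi
      rw [Finset.mem_filter] at hi
      have h1 : (i + a - 1) % (Z : ℤ) + 1 - a - 1 = (i + a - 1) % (Z : ℤ) + (-a) := by ring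
      rw [h1, hmod]
      have h2 : i + a - 1 + -a = i - 1 := by ring
      rw [h2]
      exact hid i hi.1
    · intro n hn
      rw [Finset.mem_filter] at hn
      have h1 : (n - a - 1) % (Z : ℤ) + 1 + a - 1 = (n - a - 1) % (Z : ℤ) + a := by ring
      rw [h1, hmod]
      have h2 : n - a - 1 + a = n - 1 := by ring
      rw [h2]
      exact hid n hn.1
  -- Part 1
  have part1 : ∑ i ∈ Finset.Icc 1 (Z : ℤ), b i k
      = ∑ t ∈ (Fintype.piFinset fun _ : Fin k => A).filter Function.Injective,
          (((Finset.Icc 1 (Z : ℤ)).filter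
            (fun i => ∀ j, Int.gcd (i + t j) (Z : ℤ) = 1)).card : ℤ) := by
    have hrhs : ∀ t : Fin k → ℤ,
        (((Finset.Icc 1 (Z : ℤ)).filter
            (fun i => ∀ j, Int.gcd (i + t j) (Z : ℤ) = 1)).card : ℤ)
          = ∑ i ∈ Finset.Icc 1 (Z : ℤ),
              (if ∀ j, Int.gcd (i + t j) (Z : ℤ) = 1 then (1 : ℤ) else 0) := by
      intro t
      rw [Finset.card_filter]
      push_cast
      rfl
    rw [Finset.sum_congr rfl fun t _ => hrhs t, Finset.sum_comm]
    apply Finset.sum_congr rfl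
    intro i _
    rw [← Finset.sum_filter]
    simp only [Finset.sum_const, nsmul_eq_mul, mul_one]
    rw [hbk i k, hf i, ← card_inj_tuples k]
    have hset : (Fintype.piFinset fun _ : Fin k =>
          A.filter fun a => Int.gcd (i + a) (Z : ℤ) = 1).filter Function.Injective
        = ((Fintype.piFinset fun _ : Fin k => A).filter Function.Injective).filter
            (fun t => ∀ j, Int.gcd (i + t j) (Z : ℤ) = 1) := by
      ext t
      simp only [Finset.mem_filter, Fintype.mem_piFinset]
      constructor
      · rintro ⟨hmem', hinj⟩
        exact ⟨⟨fun j => (hmem' j).1, hinj⟩, fun j => (hmem' j).2⟩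
      · rintro ⟨⟨hmem', hinj⟩, hall⟩
        exact ⟨fun j => ⟨hmem' j, hall j⟩, hinj⟩
    rw [hset]
  refine ⟨part1, ?_⟩
  -- Part 2
  set s := Finset.Icc 1 (Z : ℤ) with hs
  have hcard : s.card = Z := by
    rw [hs, Int.card_Icc]
    simp
  -- sum of f
  have hsumf : ∑ i ∈ s, f i = h * M := by
    have h1 : ∀ i : ℤ, f i = ∑ a ∈ A, (if Int.gcd (i + a) (Z : ℤ) = 1 then 1 else 0) := by
      intro i
      rw [hf i, Finset.card_filter]
    calc ∑ i ∈ s, f i = ∑ i ∈ s, ∑ a ∈ A, (if Int.gcd (i + a) (Z : ℤ) = 1 then 1 else 0) := by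
          exact Finset.sum_congr rfl fun i _ => h1 i
      _ = ∑ a ∈ A, ∑ i ∈ s, (if Int.gcd (i + a) (Z : ℤ) = 1 then 1 else 0) :=
          Finset.sum_comm
      _ = ∑ a ∈ A, (s.filter fun i => Int.gcd (i + a) (Z : ℤ) = 1).card := by
          exact Finset.sum_congr rfl fun a _ => (Finset.card_filter _ _).symm
      _ = ∑ _a ∈ A, M := Finset.sum_congr rfl fun a _ => count_window a
      _ = h * M := by rw [Finset.sum_const, hA, smul_eq_mul]
  -- Chebyshev
  have mono : MonovaryOn (fun i => ((f i : ℝ))) (fun i => (b i k : ℝ)) s := by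
    intro i _ j _ hlt
    by_contra hc
    push_neg at hc
    have hfij : f j < f i := by exact_mod_cast hc
    have : (f j).descFactorial k ≤ (f i).descFactorial k :=
      Nat.descFactorial_le k (le_of_lt hfij)
    have hb' : (b j k : ℝ) ≤ (b i k : ℝ) := by
      rw [hbk j k, hbk i k]
      exact_mod_cast this
    exact absurd hlt (not_lt.mpr hb')
  have cheb := mono.sum_mul_sum_le_card_mul_sum
  rw [hcard] at cheb
  have hsumfR : ∑ i ∈ s, ((f i : ℝ)) = (h : ℝ) * M := by
    exact_mod_cast congrArg (Nat.cast : ℕ → ℝ) hsumf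
  rw [hsumfR] at cheb
  -- rewrite f*b
  have hfb : ∀ i, (f i : ℝ) * (b i k : ℝ) = (b i (k + 1) : ℝ) + k * (b i k : ℝ) := by
    intro i
    have h1 : b i (k + 1) = b i k * ((f i : ℤ) - k) := by
      rw [hb, hb, Finset.prod_range_succ]
    have h2 : (b i (k+1) : ℝ) = (b i k : ℝ) * ((f i : ℝ) - k) := by
      rw [h1]; push_cast; ring
    rw [h2]; ring
  rw [Finset.sum_congr rfl fun i _ => hfb i] at cheb
  rw [Finset.sum_add_distrib, ← Finset.mul_sum] at cheb
  set S := ∑ i ∈ s, (b i k : ℝ)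
  set S' := ∑ i ∈ s, (b i (k + 1) : ℝ)
  have key : (h : ℝ) * M * S ≤ (Z : ℝ) * (S' + (k : ℝ) * S) := cheb
  have h1 : ((h : ℝ) * M / Z) * ((1 : ℝ) / Z * S) = ((h : ℝ) * M * S) / ((Z : ℝ) * Z) := by
    field_simp
  have h2 : (1 : ℝ) / Z * S' + (k : ℝ) * ((1 : ℝ) / Z * S)
      = ((Z : ℝ) * (S' + (k : ℝ) * S)) / ((Z : ℝ) * Z) := by
    field_simp
  rw [h1, h2]
  exact div_le_div_of_nonneg_right key (by positivity) |>.trans_eq rfl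
end
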